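/- For the truncated divisor function d_N and any prime p dividing n, one has d_N(n) ≤ 2 · d_N(n/p). -/

import Mathlib

/-- For the truncated divisor function `d_N(n) = #{k ≤ N : k ∣ n}` and any prime `p`
dividing `n`, one has `d_N(n) ≤ 2 · d_N(n/p)`. -/
theorem truncatedDivisor_div_prime (N : ℕ) (hN : 0 < N) (p n : ℕ) (hp : p.Prime)
    (hn : 0 < n) (hpn : p ∣ n) :
    ((Finset.Icc 1 N).filter (fun k => k ∣ n)).card ≤
      2 * ((Finset.Icc 1 N).filter (fun k => k ∣ n / p)).card := by
  obtain ⟨m, rfl⟩ := hpn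
  have hp0 : 0 < p := hp.pos
  have hm : 0 < m := Nat.pos_of_mul_pos_left (by rwa [mul_comm] at hn)
  rw [Nat.mul_div_cancel_left m hp0]
  set A := (Finset.Icc 1 N).filter (fun k => k ∣ p * m) with hA
  set B := (Finset.Icc 1 N).filter (fun k => k ∣ m) with hB
  have h1 : (A.filter (fun k => k ∣ m)).card ≤ B.card := by
    apply Finset.card_le_card
    intro k hk
    simp only [hA, hB, Finset.mem_filter] at *
    exact ⟨hk.1.1, hk.2⟩
  have hpd : ∀ k, k ∣ p * m → ¬ k ∣ m → p ∣ k := by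
    intro k hkpm hknm
    by_contra hnp
    exact hknm (((Nat.Prime.coprime_iff_not_dvd hp).mpr hnp).symm.dvd_of_dvd_mul_left hkpm)
  have h2 : (A.filter (fun k => ¬ k ∣ m)).card ≤ B.card := by
    apply Finset.card_le_card_of_injOn (fun k => k / p)
    · intro k hk
      simp only [hA, hB, Finset.mem_coe, Finset.mem_filter, Finset.mem_Icc] at *
      obtain ⟨⟨⟨hk1, hkN⟩, hkpm⟩, hknm⟩ := hk
      obtain ⟨j, rfl⟩ := hpd k hkpm hknm
      have hj : j ∣ m := (mul_dvd_mul_iff_left hp0.ne').mp hkpm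
      have hj1 : 1 ≤ j := Nat.pos_of_ne_zero (by rintro rfl; simp at hk1)
      rw [Nat.mul_div_cancel_left j hp0]
      exact ⟨⟨hj1, le_trans (Nat.le_mul_of_pos_left j hp0) hkN⟩, hj⟩
    · intro a ha b hb hab
      simp only [Finset.coe_filter, Set.mem_setOf_eq, hA, Finset.mem_filter] at ha hb
      obtain ⟨a', rfl⟩ := hpd a ha.1.2 ha.2
      obtain ⟨b', rfl⟩ := hpd b hb.1.2 hb.2
      simp only [Nat.mul_div_cancel_left _ hp0] at hab
      rw [hab]
  calc A.card = (A.filter (fun k => k ∣ m)).card + (A.filter (fun k => ¬ k ∣ m)).card :=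
        (Finset.card_filter_add_card_filter_not _).symm
    _ ≤ B.card + B.card := Nat.add_le_add h1 h2
    _ = 2 * B.card := (two_mul _).symm
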